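/- Let a ≥ 2 be an integer, and let I and W be disjoint finite sets of nonnegative integers. Let δ_i ∈ {1, 2, …, a−1} for i ∈ I and δ_w ∈ {1, 2, …, a−1} for w ∈ W. Then M_A(Σ_{i∈I} δ_i·a^i) − |W| ≤ M_A(Σ_{i∈I} δ_i·a^i + Σ_{w∈W} δ_w·a^w) ≤ M_A(Σ_{i∈I} δ_i·a^i) + |W|. -/

import Mathlib

/-- The `i`-th digit of `n` in base `a`. -/
def digit (a n i : ℕ) : ℕ := n / a ^ i % a

/-- `blockCount a n` is the number of maximal `a`-adic blocks of nonzero digits in the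
base-`a` representation of `n`, counted via the top ends of the blocks. -/
noncomputable def blockCount (a n : ℕ) : ℕ :=
  {i : ℕ | digit a n i ≠ 0 ∧ digit a n (i + 1) = 0}.ncard

lemma digit_add_of_digit_zero (a n w d : ℕ) (ha : 2 ≤ a) (hd : d < a)
    (h0 : digit a n w = 0) (i : ℕ) :
    digit a (n + d * a ^ w) i = if i = w then d else digit a n i := by
  have hapos : 0 < a := by omega
  have hpw : 0 < a ^ w := pow_pos hapos w
  rcases lt_trichotomy i w with hlt | heq | hgt
  · -- i < w
    simp only [if_neg (Nat.ne_of_lt hlt)]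
    have h1 : a ^ w = a ^ i * a ^ (w - i) := by
      rw [← pow_add]; congr 1; omega
    have h2 : (n + d * a ^ w) / a ^ i = n / a ^ i + d * a ^ (w - i) := by
      have he : n + d * a ^ w = n + d * a ^ (w - i) * a ^ i := by rw [h1]; ring
      rw [he]
      exact Nat.add_mul_div_right n _ (pow_pos hapos i)
    have h3 : d * a ^ (w - i) = d * a ^ (w - i - 1) * a := by
      rw [mul_assoc, ← pow_succ]; congr 2; omega
    unfold digit
    rw [h2, h3, Nat.add_mul_mod_self_right]
  · -- i = w
    subst heq
    simp only [if_pos rfl]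
    unfold digit
    have h2 : (n + d * a ^ i) / a ^ i = n / a ^ i + d :=
      Nat.add_mul_div_right n d hpw
    rw [h2]
    unfold digit at h0
    obtain ⟨k, hk⟩ := Nat.dvd_of_mod_eq_zero h0
    rw [hk, Nat.mul_add_mod]
    exact Nat.mod_eq_of_lt hd
  · -- w < i
    simp only [if_neg (Nat.ne_of_gt hgt)]
    -- key: (n + d * a ^ w) / a ^ (w+1) = n / a ^ (w+1)
    have hmod : n % a ^ (w + 1) = n % a ^ w := by
      have := @Nat.mod_pow_succ n a w
      unfold digit at h0
      rw [h0] at this; omega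
    have hrem : n % a ^ (w + 1) + d * a ^ w < a ^ (w + 1) := by
      rw [hmod]
      have h1 : n % a ^ w < a ^ w := Nat.mod_lt _ hpw
      have h2 : (1 + d) * a ^ w ≤ a * a ^ w :=
        Nat.mul_le_mul_right _ (by omega)
      calc n % a ^ w + d * a ^ w < a ^ w + d * a ^ w := by omega
        _ = (1 + d) * a ^ w := by ring
        _ ≤ a * a ^ w := h2
        _ = a ^ (w + 1) := by rw [pow_succ, mul_comm]
    have hkey : (n + d * a ^ w) / a ^ (w + 1) = n / a ^ (w + 1) := by
      conv_lhs => rw [show n = a ^ (w + 1) * (n / a ^ (w + 1)) + n % a ^ (w + 1) from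
        (Nat.div_add_mod n (a ^ (w + 1))).symm]
      rw [add_assoc, Nat.mul_add_div (pow_pos hapos _),
        Nat.div_eq_of_lt hrem, add_zero]
    have hsplit : ∀ m : ℕ, m / a ^ i = m / a ^ (w + 1) / a ^ (i - (w + 1)) := by
      intro m
      rw [Nat.div_div_eq_div_mul, ← pow_add]
      congr 2; omega
    unfold digit
    rw [hsplit (n + d * a ^ w), hsplit n, hkey]

lemma blockSet_finite (a n : ℕ) (ha : 2 ≤ a) :
    {i : ℕ | digit a n i ≠ 0 ∧ digit a n (i + 1) = 0}.Finite := by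
  apply Set.Finite.subset (Set.finite_Iic n)
  rintro i ⟨h1, -⟩
  have hdvd : a ^ i ≤ n := by
    by_contra hcon
    push_neg at hcon
    unfold digit at h1
    rw [Nat.div_eq_of_lt hcon] at h1
    simp at h1
  have : i < a ^ i := Nat.lt_pow_self (by omega)
  exact Set.mem_Iic.mpr (by omega)

lemma blockCount_add_one (a n w d : ℕ) (ha : 2 ≤ a) (hd1 : 1 ≤ d) (hd : d < a)
    (h0 : digit a n w = 0) :
    blockCount a (n + d * a ^ w) ≤ blockCount a n + 1 ∧
    blockCount a n ≤ blockCount a (n + d * a ^ w) + 1 := by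
  set m := n + d * a ^ w with hm
  set A := {i : ℕ | digit a n i ≠ 0 ∧ digit a n (i + 1) = 0} with hA
  set B := {i : ℕ | digit a m i ≠ 0 ∧ digit a m (i + 1) = 0} with hB
  have hdig := digit_add_of_digit_zero a n w d ha hd h0
  have hAfin := blockSet_finite a n ha
  have hBfin := blockSet_finite a m ha
  have hsub1 : B ⊆ insert w A := by
    rintro i ⟨h1, h2⟩
    by_cases hiw : i = w
    · exact Set.mem_insert_iff.mpr (Or.inl hiw)
    · right
      by_cases hiw1 : i + 1 = w
      · exfalso
        rw [hdig (i + 1), if_pos hiw1] at h2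
        omega
      · rw [hdig i, if_neg hiw] at h1
        rw [hdig (i + 1), if_neg hiw1] at h2
        exact ⟨h1, h2⟩
  have hsub2 : A ⊆ insert (w - 1) B := by
    rintro i ⟨h1, h2⟩
    by_cases hiw : i = w
    · exact absurd (hiw ▸ h0) h1
    by_cases hiw1 : i + 1 = w
    · exact Set.mem_insert_iff.mpr (Or.inl (by omega))
    · right
      refine ⟨?_, ?_⟩
      · rw [hdig i, if_neg hiw]; exact h1
      · rw [hdig (i + 1), if_neg hiw1]; exact h2
  constructor
  · calc B.ncard ≤ (insert w A).ncard :=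
          Set.ncard_le_ncard hsub1 (hAfin.insert w)
      _ ≤ A.ncard + 1 := Set.ncard_insert_le w A
  · calc A.ncard ≤ (insert (w - 1) B).ncard :=
          Set.ncard_le_ncard hsub2 (hBfin.insert _)
      _ ≤ B.ncard + 1 := Set.ncard_insert_le _ B

lemma digit_sum_eq_zero (a : ℕ) (ha : 2 ≤ a) (δ : ℕ → ℕ) :
    ∀ S : Finset ℕ, (∀ i ∈ S, δ i < a) → ∀ w ∉ S,
      digit a (∑ i ∈ S, δ i * a ^ i) w = 0 := by
  intro S
  induction S using Finset.induction_on with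
  | empty => intro _ w _; simp [digit]
  | @insert j s hj ih =>
    intro hbound w hw
    rw [Finset.sum_insert hj, add_comm]
    have hj0 : digit a (∑ i ∈ s, δ i * a ^ i) j = 0 :=
      ih (fun i hi => hbound i (Finset.mem_insert_of_mem hi)) j hj
    rw [digit_add_of_digit_zero a _ j (δ j) ha
      (hbound j (Finset.mem_insert_self j s)) hj0 w]
    have hwj : w ≠ j := fun h => hw (h ▸ Finset.mem_insert_self j s)
    rw [if_neg hwj]
    exact ih (fun i hi => hbound i (Finset.mem_insert_of_mem hi)) w
      (fun h => hw (Finset.mem_insert_of_mem h))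

theorem stmt_6 (a : ℕ) (ha : 2 ≤ a) (I W : Finset ℕ) (hIW : Disjoint I W)
    (δ : ℕ → ℕ) (hδ : ∀ i ∈ I ∪ W, 1 ≤ δ i ∧ δ i ≤ a - 1) :
    blockCount a (∑ i ∈ I, δ i * a ^ i) - W.card ≤
        blockCount a (∑ i ∈ I, δ i * a ^ i + ∑ w ∈ W, δ w * a ^ w) ∧
    blockCount a (∑ i ∈ I, δ i * a ^ i + ∑ w ∈ W, δ w * a ^ w) ≤
        blockCount a (∑ i ∈ I, δ i * a ^ i) + W.card := by
  induction W using Finset.induction_on with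
  | empty => simp
  | @insert w s hw ih =>
    rw [Finset.disjoint_insert_right] at hIW
    obtain ⟨hwI, hIs⟩ := hIW
    have hδ' : ∀ i ∈ I ∪ s, 1 ≤ δ i ∧ δ i ≤ a - 1 := by
      intro i hi
      apply hδ
      rw [Finset.mem_union] at hi ⊢
      rcases hi with h | h
      · exact Or.inl h
      · exact Or.inr (Finset.mem_insert_of_mem h)
    obtain ⟨ih1, ih2⟩ := ih hIs hδ'
    have hδw : 1 ≤ δ w ∧ δ w ≤ a - 1 :=
      hδ w (Finset.mem_union_right I (Finset.mem_insert_self w s))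
    set n0 := ∑ i ∈ I, δ i * a ^ i
    set n1 := n0 + ∑ i ∈ s, δ i * a ^ i with hn1
    have hdig0 : digit a n1 w = 0 := by
      rw [hn1, ← Finset.sum_union hIs]
      apply digit_sum_eq_zero a ha δ _ (fun i hi => by have := hδ' i hi; omega)
      rw [Finset.mem_union]
      push_neg
      exact ⟨hwI, hw⟩
    have hsum : n0 + ∑ i ∈ insert w s, δ i * a ^ i = n1 + δ w * a ^ w := by
      rw [Finset.sum_insert hw, hn1]; ring
    rw [hsum]
    obtain ⟨hb1, hb2⟩ := blockCount_add_one a n1 w (δ w) ha hδw.1 (by omega) hdig0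
    rw [Finset.card_insert_of_notMem hw]
    omega
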